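/- Let (K,|·|) be a normed field, f ∈ K[z] a polynomial of degree n ≥ 2, and 1 ≤ p ≤ ∞ with conjugate exponent q. Suppose x ∈ Kⁿ has pairwise distinct components and E(x) = ‖W(x)/d(x)‖_p < 1/2^{1/q}. Then the vector Tx = x − W(x) has pairwise distinct components, E(Tx) ≤ φ(E(x)), and |W_i(Tx)| ≤ β(E(x)) · |W_i(x)| for every index i, where φ(t) = ((n−1)^{1/q} t² / ((1−t)(1−2^{1/q} t))) · (1 + t/((n−1)^{1/p}(1−2^{1/q} t)))^{n−1} and β(t) = ((n−1)^{1/q} t / (1−t)) · (1 + t/((n−1)^{1/p}(1−2^{1/q} t)))^{n−1}. -/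

import Mathlib

open Finset Filter Topology
open scoped ENNReal

noncomputable def pnorm {n : ℕ} (p : ℝ≥0∞) (v : Fin n → ℝ) : ℝ :=
  if p = ⊤ then ⨆ i, |v i| else (∑ i, |v i| ^ p.toReal) ^ (1 / p.toReal)

noncomputable def epow (a : ℝ) (p : ℝ≥0∞) : ℝ :=
  if p = ⊤ then 1 else a ^ (1 / p.toReal)

noncomputable def dsep {K : Type*} [NormedField K] {n : ℕ} (x : Fin n → K) (i : Fin n) : ℝ :=
  sInf {r : ℝ | ∃ j, j ≠ i ∧ r = ‖x i - x j‖}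

noncomputable def Wcorr {K : Type*} [NormedField K] {n : ℕ} (f : Polynomial K)
    (x : Fin n → K) (i : Fin n) : K :=
  Polynomial.eval (x i) f / (f.leadingCoeff * ∏ j ∈ Finset.univ.erase i, (x i - x j))

def IsRootVector {K : Type*} [NormedField K] {n : ℕ} (f : Polynomial K) (ξ : Fin n → K) : Prop :=
  ∀ z : K, Polynomial.eval z f = f.leadingCoeff * ∏ i, (z - ξ i)

section dsepLemmas
variable {K : Type*} [NormedField K] {n : ℕ}

lemma dsep_bddBelow (x : Fin n → K) (i : Fin n) :
    BddBelow {r : ℝ | ∃ j, j ≠ i ∧ r = ‖x i - x j‖} :=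
  ⟨0, by rintro r ⟨j, _, rfl⟩; exact norm_nonneg _⟩

lemma dsep_le {x : Fin n → K} {i j : Fin n} (hj : j ≠ i) :
    dsep x i ≤ ‖x i - x j‖ :=
  csInf_le (dsep_bddBelow x i) ⟨j, hj, rfl⟩

lemma le_dsep (hn : 2 ≤ n) {x : Fin n → K} {i : Fin n} {c : ℝ}
    (h : ∀ j, j ≠ i → c ≤ ‖x i - x j‖) : c ≤ dsep x i := by
  have : Nontrivial (Fin n) := Fin.nontrivial_iff_two_le.2 hn
  obtain ⟨j, hj⟩ := exists_ne i
  refine le_csInf ⟨_, j, hj, rfl⟩ ?_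
  rintro r ⟨k, hk, rfl⟩
  exact h k hk

lemma exists_dsep_eq (hn : 2 ≤ n) (x : Fin n → K) (i : Fin n) :
    ∃ j, j ≠ i ∧ dsep x i = ‖x i - x j‖ := by
  have : Nontrivial (Fin n) := Fin.nontrivial_iff_two_le.2 hn
  obtain ⟨j, hj⟩ := exists_ne i
  have hfin : Set.Finite {r : ℝ | ∃ j, j ≠ i ∧ r = ‖x i - x j‖} := by
    apply Set.Finite.subset (Set.finite_range (fun j => ‖x i - x j‖))
    rintro r ⟨k, _, rfl⟩; exact ⟨k, rfl⟩
  have hmem := (Set.Nonempty.csInf_mem ⟨_, j, hj, rfl⟩ hfin : dsep x i ∈ _)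
  exact hmem

lemma dsep_pos (hn : 2 ≤ n) {x : Fin n → K} (hx : Function.Injective x) (i : Fin n) :
    0 < dsep x i := by
  obtain ⟨j, hj, hEq⟩ := exists_dsep_eq hn x i
  rw [hEq, norm_pos_iff, sub_ne_zero]
  exact fun h => hj (hx h.symm)

end dsepLemmas

section pnormLemmas
variable {n : ℕ}

lemma pnorm_nonneg (p : ℝ≥0∞) (v : Fin n → ℝ) : 0 ≤ pnorm p v := by
  unfold pnorm
  split_ifs
  · exact Real.iSup_nonneg fun i => abs_nonneg _
  · exact Real.rpow_nonneg (Finset.sum_nonneg fun i _ => Real.rpow_nonneg (abs_nonneg _) _) _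

lemma le_pnorm [Nonempty (Fin n)] {p : ℝ≥0∞} (hp : 1 ≤ p) (v : Fin n → ℝ) (i : Fin n) :
    |v i| ≤ pnorm p v := by
  unfold pnorm
  split_ifs with h
  · exact le_ciSup (f := fun i => |v i|) (Set.Finite.bddAbove (Set.finite_range _)) i
  · have hr : (1:ℝ) ≤ p.toReal := by simpa using ENNReal.toReal_mono h hp
    have hr0 : (0:ℝ) < p.toReal := lt_of_lt_of_le one_pos hr
    have h1 : |v i| ^ p.toReal ≤ ∑ j, |v j| ^ p.toReal :=
      Finset.single_le_sum (fun j _ => Real.rpow_nonneg (abs_nonneg _) _) (Finset.mem_univ i)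
    calc |v i| = (|v i| ^ p.toReal) ^ (1 / p.toReal) := by
          rw [← Real.rpow_mul (abs_nonneg _), mul_one_div_cancel hr0.ne', Real.rpow_one]
      _ ≤ _ := Real.rpow_le_rpow (Real.rpow_nonneg (abs_nonneg _) _) h1 (by positivity)

lemma pnorm_le_mul [Nonempty (Fin n)] {p : ℝ≥0∞} (hp : 1 ≤ p) {v w : Fin n → ℝ} {c : ℝ}
    (hc : 0 ≤ c) (h : ∀ i, |v i| ≤ c * |w i|) : pnorm p v ≤ c * pnorm p w := by
  unfold pnorm
  split_ifs with ht
  · refine ciSup_le fun i => (h i).trans ?_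
    exact mul_le_mul_of_nonneg_left
      (le_ciSup (f := fun i => |w i|) (Set.Finite.bddAbove (Set.finite_range _)) i) hc
  · have hr : (1:ℝ) ≤ p.toReal := by simpa using ENNReal.toReal_mono ht hp
    have hr0 : (0:ℝ) < p.toReal := lt_of_lt_of_le one_pos hr
    have hw : (0:ℝ) ≤ ∑ i, |w i| ^ p.toReal :=
      Finset.sum_nonneg fun i _ => Real.rpow_nonneg (abs_nonneg _) _
    have h1 : ∑ i, |v i| ^ p.toReal ≤ c ^ p.toReal * ∑ i, |w i| ^ p.toReal := by
      rw [Finset.mul_sum]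
      refine Finset.sum_le_sum fun i _ => ?_
      calc |v i| ^ p.toReal ≤ (c * |w i|) ^ p.toReal :=
            Real.rpow_le_rpow (abs_nonneg _) (h i) hr0.le
        _ = c ^ p.toReal * |w i| ^ p.toReal := Real.mul_rpow hc (abs_nonneg _)
    calc (∑ i, |v i| ^ p.toReal) ^ (1/p.toReal)
        ≤ (c ^ p.toReal * ∑ i, |w i| ^ p.toReal) ^ (1/p.toReal) :=
          Real.rpow_le_rpow (Finset.sum_nonneg fun i _ => Real.rpow_nonneg (abs_nonneg _) _)
            h1 (by positivity)
      _ = c * (∑ i, |w i| ^ p.toReal) ^ (1/p.toReal) := by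
          rw [Real.mul_rpow (by positivity) hw, ← Real.rpow_mul hc,
            mul_one_div_cancel hr0.ne', Real.rpow_one]

end pnormLemmas

section epowLemmas

lemma epow_pos {a : ℝ} (ha : 0 < a) (p : ℝ≥0∞) : 0 < epow a p := by
  unfold epow; split_ifs
  · exact one_pos
  · exact Real.rpow_pos_of_pos ha _

lemma one_le_epow {a : ℝ} (ha : 1 ≤ a) (p : ℝ≥0∞) : 1 ≤ epow a p := by
  unfold epow; split_ifs
  · exact le_refl 1
  · exact Real.one_le_rpow ha (by positivity)

end epowLemmas

section conjLemmas
variable {p q : ℝ≥0∞}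

lemma conj_q_one_le (hpq : 1/p + 1/q = 1) : 1 ≤ q := by
  rw [← ENNReal.inv_le_inv, inv_one]
  rw [one_div, one_div] at hpq
  rw [← hpq]
  exact le_add_self

lemma conj_q_eq_one (hpq : 1/p + 1/q = 1) (hpt : p = ⊤) : q = 1 := by
  subst hpt
  simp only [one_div, ENNReal.inv_top, zero_add] at hpq
  exact ENNReal.inv_eq_one.mp hpq

lemma conj_p_eq_one (hpq : 1/p + 1/q = 1) (hqt : q = ⊤) : p = 1 := by
  subst hqt
  simp only [one_div, ENNReal.inv_top, add_zero] at hpq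
  exact ENNReal.inv_eq_one.mp hpq

lemma conj_real (hp : 1 ≤ p) (hpq : 1/p + 1/q = 1) (hpt : p ≠ ⊤) (hqt : q ≠ ⊤) :
    Real.HolderConjugate p.toReal q.toReal := by
  have hq : 1 ≤ q := conj_q_one_le hpq
  have hp0 : p ≠ 0 := by intro h; rw [h] at hp; simp at hp
  have hq0 : q ≠ 0 := by intro h; rw [h] at hq; simp at hq
  have hp1 : 1 < p := by
    rcases lt_or_eq_of_le hp with h | h
    · exact h
    · exfalso; apply hqt; rw [← h] at hpq
      simp only [one_div, inv_one] at hpq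
      have h0 : q⁻¹ = 0 :=
        (ENNReal.add_right_inj (a := (1:ℝ≥0∞)) (by simp)).mp (hpq.trans (add_zero 1).symm)
      rwa [ENNReal.inv_eq_zero] at h0
  rw [Real.holderConjugate_iff]
  constructor
  · rw [show (1:ℝ) = (1:ℝ≥0∞).toReal by simp]
    exact (ENNReal.toReal_lt_toReal (by simp) hpt).mpr hp1
  · have := congrArg ENNReal.toReal hpq
    rw [ENNReal.toReal_add (by simp [one_div, ENNReal.inv_ne_top, hp0])
      (by simp [one_div, ENNReal.inv_ne_top, hq0])] at this
    simpa [one_div, ENNReal.toReal_inv] using this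

end conjLemmas

section holder
variable {n : ℕ} {p q : ℝ≥0∞}

lemma epow_one (a : ℝ) : epow a 1 = a := by
  unfold epow
  rw [if_neg (by simp)]
  simp

lemma epow_top (a : ℝ) : epow a ⊤ = 1 := by unfold epow; simp

lemma epow_mul_epow (hp : 1 ≤ p) (hpq : 1/p + 1/q = 1) {m : ℝ} (hm : 0 < m) :
    epow m p * epow m q = m := by
  by_cases hpt : p = ⊤
  · rw [hpt, epow_top, conj_q_eq_one hpq hpt, epow_one, one_mul]
  by_cases hqt : q = ⊤
  · rw [hqt, epow_top, conj_p_eq_one hpq hqt, epow_one, mul_one]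
  · have hc := conj_real hp hpq hpt hqt
    unfold epow
    rw [if_neg hpt, if_neg hqt, ← Real.rpow_add hm]
    rw [show 1/p.toReal + 1/q.toReal = 1 by
      have := hc.inv_add_inv_eq_one; rw [one_div, one_div]; linarith]
    exact Real.rpow_one m

lemma sum_le_epow_mul_pnorm [Nonempty (Fin n)] (hp : 1 ≤ p)
    (hpq : 1/p + 1/q = 1) (v : Fin n → ℝ) (hv : ∀ i, 0 ≤ v i) (S : Finset (Fin n)) :
    ∑ j ∈ S, v j ≤ epow (S.card : ℝ) q * pnorm p v := by
  have habs : ∀ i, |v i| = v i := fun i => abs_of_nonneg (hv i)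
  by_cases hqt : q = ⊤
  · have hp1 : p = 1 := conj_p_eq_one hpq hqt
    subst hp1
    rw [hqt, epow_top, one_mul]
    unfold pnorm
    rw [if_neg (by simp)]
    simp only [ENNReal.toReal_one, Real.rpow_one, ne_eq, one_ne_zero, not_false_eq_true,
      div_self]
    calc ∑ j ∈ S, v j ≤ ∑ j, v j :=
          Finset.sum_le_sum_of_subset_of_nonneg (Finset.subset_univ S) fun i _ _ => hv i
      _ = ∑ j, |v j| := by simp [habs]
  by_cases hpt : p = ⊤
  · have hq1 : q = 1 := conj_q_eq_one hpq hpt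
    subst hq1
    rw [hpt, epow_one]
    unfold pnorm
    rw [if_pos rfl]
    have hb : ∀ j ∈ S, v j ≤ ⨆ i, |v i| := fun j _ => (le_abs_self _).trans
      (le_ciSup (f := fun i => |v i|) (Set.Finite.bddAbove (Set.finite_range _)) j)
    calc ∑ j ∈ S, v j ≤ S.card • (⨆ i, |v i|) := Finset.sum_le_card_nsmul S v _ hb
      _ = (S.card : ℝ) * (⨆ i, |v i|) := nsmul_eq_mul _ _
  · have hc := conj_real hp hpq hpt hqt
    have key := Real.inner_le_Lp_mul_Lq S v (fun _ => 1) hc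
    simp only [mul_one, abs_one] at key
    have h1 : (∑ _j ∈ S, (1:ℝ) ^ q.toReal) = (S.card : ℝ) := by
      simp [Real.one_rpow]
    rw [h1] at key
    unfold pnorm epow
    rw [if_neg hpt, if_neg hqt]
    refine key.trans ?_
    rw [mul_comm]
    refine mul_le_mul_of_nonneg_left ?_ (Real.rpow_nonneg (Nat.cast_nonneg _) _)
    refine Real.rpow_le_rpow (Finset.sum_nonneg fun i _ => Real.rpow_nonneg (abs_nonneg _) _)
      ?_ (by positivity)
    exact Finset.sum_le_sum_of_subset_of_nonneg (Finset.subset_univ S)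
      fun i _ _ => Real.rpow_nonneg (abs_nonneg _) _

lemma prod_one_add_le {ι : Type*} (S : Finset ι) (hS : S.Nonempty) (a : ι → ℝ)
    (ha : ∀ i ∈ S, 0 ≤ a i) :
    ∏ i ∈ S, (1 + a i) ≤ (1 + (∑ i ∈ S, a i) / S.card) ^ S.card := by
  have hm : 0 < (S.card : ℝ) := by
    have := Finset.card_pos.mpr hS
    positivity
  have key := Real.geom_mean_le_arith_mean_weighted S (fun _ => 1 / (S.card:ℝ))
    (fun i => 1 + a i) (fun i _ => by positivity)
    (by rw [Finset.sum_const, nsmul_eq_mul]; field_simp)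
    (fun i hi => by have := ha i hi; linarith)
  beta_reduce at key
  have hrhs : ∑ i ∈ S, (1/(S.card:ℝ)) * (1 + a i) = 1 + (∑ i ∈ S, a i)/S.card := by
    rw [← Finset.mul_sum, Finset.sum_add_distrib, Finset.sum_const, nsmul_eq_mul, mul_one]
    field_simp
  have h2 : (∏ i ∈ S, (1 + a i) ^ (1/(S.card:ℝ))) ^ S.card = ∏ i ∈ S, (1 + a i) := by
    rw [← Finset.prod_pow]
    refine Finset.prod_congr rfl fun i hi => ?_
    rw [← Real.rpow_natCast ((1 + a i) ^ (1/(S.card:ℝ))) S.card,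
      ← Real.rpow_mul (by have := ha i hi; linarith), one_div,
      inv_mul_cancel₀ hm.ne', Real.rpow_one]
  calc ∏ i ∈ S, (1 + a i) = (∏ i ∈ S, (1 + a i) ^ (1/(S.card:ℝ))) ^ S.card := h2.symm
    _ ≤ (1 + (∑ i ∈ S, a i)/S.card) ^ S.card := by
        refine pow_le_pow_left₀ (Finset.prod_nonneg fun i hi => ?_) (key.trans_eq hrhs) _
        exact Real.rpow_nonneg (by have := ha i hi; linarith) _

end holder

section weierstrass
open Polynomial
variable {K : Type*} [NormedField K] {n : ℕ}

lemma weierstrass_identity (hn : 1 ≤ n) {f : Polynomial K} (hdeg : f.natDegree = n)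
    {x : Fin n → K} (hx : Function.Injective x) (z : K) :
    Polynomial.eval z f = f.leadingCoeff *
      (∏ j, (z - x j) + ∑ i, Wcorr f x i * ∏ j ∈ Finset.univ.erase i, (z - x j)) := by
  have hf0 : f ≠ 0 := fun h => by rw [h, natDegree_zero] at hdeg; omega
  have ha : f.leadingCoeff ≠ 0 := leadingCoeff_ne_zero.mpr hf0
  have hsub : ∀ i j : Fin n, j ≠ i → x i - x j ≠ 0 := fun i j hji => by
    rw [sub_ne_zero]; exact fun h => hji (hx h.symm)
  have hprod_ne : ∀ i : Fin n, (∏ j ∈ Finset.univ.erase i, (x i - x j)) ≠ 0 := fun i =>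
    Finset.prod_ne_zero_iff.mpr fun j hj => hsub i j (Finset.ne_of_mem_erase hj)
  set M : Polynomial K := ∏ j, (X - C (x j)) with hM
  set L : Polynomial K := ∑ i, C (Wcorr f x i) * ∏ j ∈ Finset.univ.erase i, (X - C (x j))
    with hL
  have hMmonic : M.Monic := monic_prod_of_monic _ _ fun j _ => monic_X_sub_C _
  have hMdeg : M.degree = (n : ℕ) := by
    rw [hM, degree_prod]
    simp [degree_X_sub_C]
  have hLdeg : L.degree < (n : ℕ) := by
    rw [hL]
    apply lt_of_le_of_lt (degree_sum_le _ _)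
    rw [Finset.sup_lt_iff (by exact_mod_cast WithBot.bot_lt_coe n)]
    intro i _
    apply lt_of_le_of_lt (degree_mul_le _ _)
    have h1 : (∏ j ∈ Finset.univ.erase i, (X - C (x j)) : Polynomial K).degree
        = ((n - 1 : ℕ) : WithBot ℕ) := by
      rw [degree_prod]
      simp only [degree_X_sub_C, Finset.sum_const, nsmul_eq_mul, mul_one]
      rw [Finset.card_erase_of_mem (Finset.mem_univ i), Finset.card_univ, Fintype.card_fin]
    rw [h1]
    apply lt_of_le_of_lt (add_le_add degree_C_le (le_refl _))
    rw [zero_add]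
    exact_mod_cast WithBot.coe_lt_coe.mpr (by omega)
  have hfdeg : f.degree = (n : ℕ) := by rw [degree_eq_natDegree hf0, hdeg]
  set P : Polynomial K := C f.leadingCoeff * (M + L) with hP
  have hPeval : ∀ i : Fin n, P.eval (x i) = f.eval (x i) := by
    intro i
    rw [hP, eval_mul, eval_C, eval_add]
    have hMe : M.eval (x i) = 0 := by
      rw [hM, eval_prod]
      exact Finset.prod_eq_zero (Finset.mem_univ i) (by simp)
    have hLe : L.eval (x i) = Wcorr f x i * ∏ j ∈ Finset.univ.erase i, (x i - x j) := by
      rw [hL, eval_finset_sum]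
      rw [Finset.sum_eq_single i]
      · simp [eval_prod]
      · intro k _ hk
        rw [eval_mul, eval_prod]
        rw [Finset.prod_eq_zero (Finset.mem_erase.mpr ⟨hk.symm, Finset.mem_univ i⟩) (by simp)]
        ring
      · intro h; exact absurd (Finset.mem_univ i) h
    rw [hMe, hLe, zero_add, Wcorr]
    field_simp [ha, hprod_ne i]
  have hlcCM : (C f.leadingCoeff * M).leadingCoeff = f.leadingCoeff := by
    rw [leadingCoeff_mul, leadingCoeff_C, hMmonic.leadingCoeff, mul_one]
  have hfP : f = P := by
    have hPdegsub : (f - P).degree < (n : ℕ) := by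
      have h1 : f - P = (f - C f.leadingCoeff * M) - C f.leadingCoeff * L := by
        rw [hP]; ring
      rw [h1]
      apply lt_of_le_of_lt (degree_sub_le _ _)
      rw [max_lt_iff]
      constructor
      · have hCaM : (C f.leadingCoeff * M).degree = (n : ℕ) := by
          rw [degree_C_mul ha, hMdeg]
        have h2 := degree_sub_lt (hfdeg.trans hCaM.symm) hf0 hlcCM.symm
        rwa [hfdeg] at h2
      · apply lt_of_le_of_lt (degree_mul_le _ _)
        apply lt_of_le_of_lt (add_le_add degree_C_le (le_refl L.degree))
        rw [zero_add]; exact hLdeg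
    by_cases hz : f - P = 0
    · exact sub_eq_zero.mp hz
    · have hcard : (f - P).natDegree < Fintype.card (Fin n) := by
        rw [Fintype.card_fin]
        exact (natDegree_lt_iff_degree_lt hz).mpr hPdegsub
      have h0 := Polynomial.eq_zero_of_natDegree_lt_card_of_eval_eq_zero (f - P) hx
        (fun i => by rw [eval_sub, hPeval i, sub_self]) hcard
      exact (sub_eq_zero.mp h0)
  have hzP : eval z f = eval z P := by rw [← hfP]
  rw [hzP, hP, eval_mul, eval_C, eval_add, hM, hL, eval_prod, eval_finset_sum]
  simp [eval_prod]

end weierstrass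

set_option maxHeartbeats 2000000

/-- semilocal contraction lemma. If `x` has pairwise distinct components
and `E(x) = ‖W(x)/d(x)‖_p < 1/2^{1/q}`, then `Tx = x − W(x)` has pairwise distinct
components, `E(Tx) ≤ φ(E(x))` and `|W_i(Tx)| ≤ β(E(x))|W_i(x)|`. -/
theorem weierstrass_semilocal_contraction
    {K : Type*} [NormedField K] {n : ℕ} (hn : 2 ≤ n)
    (f : Polynomial K) (hdeg : f.natDegree = n)
    (p q : ℝ≥0∞) (hp : 1 ≤ p) (hpq : 1 / p + 1 / q = 1)
    (E : (Fin n → K) → ℝ)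
    (hE : ∀ y : Fin n → K, E y = pnorm p (fun i => ‖Wcorr f y i‖ / dsep y i))
    (φ β : ℝ → ℝ)
    (hφ : ∀ t : ℝ, φ t = epow ((n : ℝ) - 1) q * t ^ 2 / ((1 - t) * (1 - epow 2 q * t)) *
      (1 + t / (epow ((n : ℝ) - 1) p * (1 - epow 2 q * t))) ^ (n - 1))
    (hβ : ∀ t : ℝ, β t = epow ((n : ℝ) - 1) q * t / (1 - t) *
      (1 + t / (epow ((n : ℝ) - 1) p * (1 - epow 2 q * t))) ^ (n - 1))
    (x : Fin n → K) (hx : Function.Injective x) (hEx : E x < 1 / epow 2 q) :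
    Function.Injective (fun i => x i - Wcorr f x i) ∧
    E (fun i => x i - Wcorr f x i) ≤ φ (E x) ∧
    ∀ i : Fin n,
      ‖Wcorr f (fun j => x j - Wcorr f x j) i‖ ≤ β (E x) * ‖Wcorr f x i‖ := by
  classical
  have hne : Nonempty (Fin n) := ⟨⟨0, by omega⟩⟩
  have hn1 : 1 ≤ n := by omega
  have hf0 : f ≠ 0 := fun h => by rw [h, Polynomial.natDegree_zero] at hdeg; omega
  have ha : f.leadingCoeff ≠ 0 := Polynomial.leadingCoeff_ne_zero.mpr hf0
  set T : Fin n → K := fun i => x i - Wcorr f x i with hT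
  set γ : ℝ := epow 2 q with hγ
  set A : ℝ := epow ((n : ℝ) - 1) q with hA
  set B : ℝ := epow ((n : ℝ) - 1) p with hB
  set t : ℝ := E x with htdef
  set W : Fin n → K := Wcorr f x with hW
  set d : Fin n → ℝ := dsep x with hd
  -- basic positivity facts
  have hq1 : 1 ≤ q := conj_q_one_le hpq
  have hγ1 : (1:ℝ) ≤ γ := one_le_epow one_le_two q
  have hγ0 : (0:ℝ) < γ := lt_of_lt_of_le one_pos hγ1
  have hn2 : (2:ℝ) ≤ (n:ℝ) := by exact_mod_cast hn
  have hmn : (0:ℝ) < (n:ℝ) - 1 := by linarith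
  have hA1 : (1:ℝ) ≤ A := one_le_epow (by linarith) q
  have hB1 : (1:ℝ) ≤ B := one_le_epow (by linarith) p
  have hA0 : (0:ℝ) < A := lt_of_lt_of_le one_pos hA1
  have hB0 : (0:ℝ) < B := lt_of_lt_of_le one_pos hB1
  have hAB : A * B = (n:ℝ) - 1 := by
    rw [hA, hB, mul_comm]; exact epow_mul_epow hp hpq hmn
  have hd_pos : ∀ i, 0 < d i := fun i => dsep_pos hn hx i
  have hti_nonneg : ∀ i, 0 ≤ ‖W i‖ / d i :=
    fun i => div_nonneg (norm_nonneg _) (hd_pos i).le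
  have ht_eq : t = pnorm p (fun i => ‖W i‖ / d i) := hE x
  have ht0 : 0 ≤ t := by rw [ht_eq]; exact pnorm_nonneg _ _
  have hti_le : ∀ i, ‖W i‖ / d i ≤ t := by
    intro i
    rw [ht_eq]
    have := le_pnorm (n := n) hp (fun i => ‖W i‖ / d i) i
    rwa [abs_of_nonneg (hti_nonneg i)] at this
  have hγt : γ * t < 1 := by
    rw [← lt_div_iff₀' hγ0]; exact hEx
  have h1γt : (0:ℝ) < 1 - γ * t := by linarith
  have ht1 : t < 1 := by nlinarith
  have h1t : (0:ℝ) < 1 - t := by linarith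
  have hWd : ∀ i, ‖W i‖ = ‖W i‖ / d i * d i :=
    fun i => (div_mul_cancel₀ _ (hd_pos i).ne').symm
  -- pairwise sums
  have hpair : ∀ i j : Fin n, j ≠ i → ‖W i‖ / d i + ‖W j‖ / d j ≤ γ * t := by
    intro i j hji
    have hcard : ({i, j} : Finset (Fin n)).card = 2 := Finset.card_pair (Ne.symm hji)
    have hsum := sum_le_epow_mul_pnorm (n := n) hp hpq (fun k => ‖W k‖ / d k)
      hti_nonneg {i, j}
    rw [Finset.sum_pair (Ne.symm hji), hcard, ← ht_eq] at hsum
    have h2 : ((2:ℕ):ℝ) = (2:ℝ) := by norm_num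
    rw [h2] at hsum
    exact hsum
  -- separation of T
  have hTsep : ∀ i j : Fin n, j ≠ i → (1 - γ * t) * ‖x i - x j‖ ≤ ‖T i - T j‖ := by
    intro i j hji
    have hdij : d i ≤ ‖x i - x j‖ := dsep_le hji
    have hdji : d j ≤ ‖x i - x j‖ := by
      rw [norm_sub_rev]; exact dsep_le (Ne.symm hji)
    have hWi : ‖W i‖ ≤ ‖W i‖ / d i * ‖x i - x j‖ :=
      calc ‖W i‖ = ‖W i‖ / d i * d i := hWd i
        _ ≤ ‖W i‖ / d i * ‖x i - x j‖ := mul_le_mul_of_nonneg_left hdij (hti_nonneg i)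
    have hWj : ‖W j‖ ≤ ‖W j‖ / d j * ‖x i - x j‖ :=
      calc ‖W j‖ = ‖W j‖ / d j * d j := hWd j
        _ ≤ ‖W j‖ / d j * ‖x i - x j‖ := mul_le_mul_of_nonneg_left hdji (hti_nonneg j)
    have heq : T i - T j = (x i - x j) - (W i - W j) := by
      show (x i - W i) - (x j - W j) = _; ring
    have h1 : ‖x i - x j‖ - ‖W i - W j‖ ≤ ‖T i - T j‖ := by
      rw [heq]; exact norm_sub_norm_le _ _
    have h2 : ‖W i - W j‖ ≤ ‖W i‖ + ‖W j‖ := norm_sub_le _ _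
    have h3 := hpair i j hji
    nlinarith [mul_le_mul_of_nonneg_right h3 (norm_nonneg (x i - x j))]
  have hxij : ∀ i j : Fin n, j ≠ i → (0:ℝ) < ‖x i - x j‖ := by
    intro i j hji
    rw [norm_pos_iff, sub_ne_zero]
    exact fun h => hji (hx h.symm)
  have hTinj : Function.Injective T := by
    intro i j h
    by_contra hne2
    have h1 := hTsep i j (Ne.symm hne2)
    have h2 : ‖T i - T j‖ = 0 := by rw [h, sub_self, norm_zero]
    have h3 := hxij i j (Ne.symm hne2)
    nlinarith
  have hdT : ∀ i, (1 - γ * t) * d i ≤ dsep T i := by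
    intro i
    refine le_dsep hn ?_
    intro j hj
    calc (1 - γ * t) * d i ≤ (1 - γ * t) * ‖x i - x j‖ :=
          mul_le_mul_of_nonneg_left (dsep_le hj) h1γt.le
      _ ≤ ‖T i - T j‖ := hTsep i j hj
  have hdT_pos : ∀ i, 0 < dsep T i := fun i =>
    lt_of_lt_of_le (mul_pos h1γt (hd_pos i)) (hdT i)
  -- the key estimate
  have hkey : ∀ i : Fin n, ‖Wcorr f T i‖ ≤ β t * ‖W i‖ := by
    intro i
    have hSne : (Finset.univ.erase i).Nonempty := by
      have : Nontrivial (Fin n) := Fin.nontrivial_iff_two_le.2 hn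
      obtain ⟨j, hj⟩ := exists_ne i
      exact ⟨j, Finset.mem_erase.mpr ⟨hj, Finset.mem_univ j⟩⟩
    have hScard : (Finset.univ.erase i).card = n - 1 := by
      rw [Finset.card_erase_of_mem (Finset.mem_univ i), Finset.card_univ, Fintype.card_fin]
    have hScast : (((Finset.univ.erase i).card : ℕ) : ℝ) = (n:ℝ) - 1 := by
      rw [hScard, Nat.cast_sub hn1, Nat.cast_one]
    have hTxi : T i - x i = - W i := by
      show (x i - Wcorr f x i) - x i = - W i; rw [← hW]; ring
    have hid := weierstrass_identity hn1 hdeg hx (T i)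
    rw [← hW] at hid
    have e1 : (∏ j, (T i - x j)) = (- W i) * ∏ j ∈ Finset.univ.erase i, (T i - x j) := by
      rw [← Finset.mul_prod_erase Finset.univ _ (Finset.mem_univ i), hTxi]
    have e2 : ∑ k ∈ Finset.univ.erase i, W k * ∏ j ∈ Finset.univ.erase k, (T i - x j)
        = (- W i) * ∑ k ∈ Finset.univ.erase i,
            W k * ∏ j ∈ (Finset.univ.erase i).erase k, (T i - x j) := by
      rw [Finset.mul_sum]
      refine Finset.sum_congr rfl fun k hk => ?_
      have hik : i ∈ Finset.univ.erase k :=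
        Finset.mem_erase.mpr ⟨(Finset.ne_of_mem_erase hk).symm, Finset.mem_univ i⟩
      rw [← Finset.mul_prod_erase _ _ hik, hTxi, Finset.erase_right_comm]
      ring
    have e3 : Polynomial.eval (T i) f
        = f.leadingCoeff * ((- W i) * ∑ k ∈ Finset.univ.erase i,
            W k * ∏ j ∈ (Finset.univ.erase i).erase k, (T i - x j)) := by
      rw [hid, e1, ← Finset.add_sum_erase Finset.univ _ (Finset.mem_univ i), e2]
      ring
    have hD_pos : 0 < ∏ j ∈ Finset.univ.erase i, ‖T i - T j‖ := by
      refine Finset.prod_pos fun j hj => ?_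
      have hji := Finset.ne_of_mem_erase hj
      calc (0:ℝ) < (1 - γ * t) * ‖x i - x j‖ := mul_pos h1γt (hxij i j hji)
        _ ≤ ‖T i - T j‖ := hTsep i j hji
    have hnormW : ‖Wcorr f T i‖ = ‖W i‖ * ‖∑ k ∈ Finset.univ.erase i,
          W k * ∏ j ∈ (Finset.univ.erase i).erase k, (T i - x j)‖
        / ∏ j ∈ Finset.univ.erase i, ‖T i - T j‖ := by
      have hdef : Wcorr f T i = Polynomial.eval (T i) f
          / (f.leadingCoeff * ∏ j ∈ Finset.univ.erase i, (T i - T j)) := rfl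
      rw [hdef, e3, norm_div, norm_mul, norm_mul, norm_neg, norm_mul, norm_prod,
        mul_div_mul_left _ _ (norm_ne_zero_iff.mpr ha)]
    -- per-index bounds
    have hfac : ∀ j ∈ Finset.univ.erase i,
        ‖T i - x j‖ ≤ (1 + (‖W j‖ / d j) / (1 - γ * t)) * ‖T i - T j‖ := by
      intro j hj
      have hji := Finset.ne_of_mem_erase hj
      have h1 : ‖T i - x j‖ ≤ ‖T i - T j‖ + ‖W j‖ := by
        have heq2 : T i - x j = (T i - T j) + (T j - x j) := by ring
        rw [heq2]
        refine (norm_add_le _ _).trans ?_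
        have heq3 : T j - x j = - W j := by
          show (x j - Wcorr f x j) - x j = - W j; rw [← hW]; ring
        rw [heq3, norm_neg]
      have hdj : d j ≤ ‖x i - x j‖ := by
        rw [norm_sub_rev]; exact dsep_le (Ne.symm hji)
      have h2 : (1 - γ * t) * d j ≤ ‖T i - T j‖ :=
        le_trans (mul_le_mul_of_nonneg_left hdj h1γt.le) (hTsep i j hji)
      have h3 : ‖W j‖ ≤ (‖W j‖ / d j) * (‖T i - T j‖ / (1 - γ * t)) :=
        calc ‖W j‖ = ‖W j‖ / d j * d j := hWd j
          _ ≤ (‖W j‖ / d j) * (‖T i - T j‖ / (1 - γ * t)) :=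
            mul_le_mul_of_nonneg_left ((le_div_iff₀ h1γt).mpr (by linarith)) (hti_nonneg j)
      calc ‖T i - x j‖ ≤ ‖T i - T j‖ + ‖W j‖ := h1
        _ ≤ ‖T i - T j‖ + (‖W j‖ / d j) * (‖T i - T j‖ / (1 - γ * t)) := by linarith
        _ = (1 + (‖W j‖ / d j) / (1 - γ * t)) * ‖T i - T j‖ := by ring
    have hWj3 : ∀ j ∈ Finset.univ.erase i,
        ‖W j‖ ≤ (‖W j‖ / d j) * ‖T i - x j‖ / (1 - t) := by
      intro j hj
      have hji := Finset.ne_of_mem_erase hj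
      have hdj : d j ≤ ‖x i - x j‖ := by
        rw [norm_sub_rev]; exact dsep_le (Ne.symm hji)
      have hdij : d i ≤ ‖x i - x j‖ := dsep_le hji
      have hWi : ‖W i‖ ≤ ‖W i‖ / d i * ‖x i - x j‖ :=
        calc ‖W i‖ = ‖W i‖ / d i * d i := hWd i
          _ ≤ ‖W i‖ / d i * ‖x i - x j‖ := mul_le_mul_of_nonneg_left hdij (hti_nonneg i)
      have h1 : ‖x i - x j‖ - ‖W i‖ ≤ ‖T i - x j‖ := by
        have heq2 : T i - x j = (x i - x j) - W i := by
          show (x i - Wcorr f x i) - x j = _; rw [← hW]; ring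
        rw [heq2]; exact norm_sub_norm_le _ _
      have h2 : (1 - t) * d j ≤ ‖T i - x j‖ := by
        nlinarith [hti_le i, hxij i j hji, mul_nonneg (sub_nonneg.mpr (hti_le i))
          (norm_nonneg (x i - x j)), mul_nonneg h1t.le (sub_nonneg.mpr hdj)]
      have he : (‖W j‖ / d j) * ((1 - t) * d j) = ‖W j‖ * (1 - t) := by
        field_simp [(hd_pos j).ne']
      have h4 : ‖W j‖ * (1 - t) ≤ (‖W j‖ / d j) * ‖T i - x j‖ :=
        calc ‖W j‖ * (1 - t) = (‖W j‖ / d j) * ((1 - t) * d j) := he.symm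
          _ ≤ (‖W j‖ / d j) * ‖T i - x j‖ := mul_le_mul_of_nonneg_left h2 (hti_nonneg j)
      exact (le_div_iff₀ h1t).mpr h4
    have hNum : ‖∑ k ∈ Finset.univ.erase i,
          W k * ∏ j ∈ (Finset.univ.erase i).erase k, (T i - x j)‖
        ≤ (∑ k ∈ Finset.univ.erase i, ‖W k‖ / d k) / (1 - t)
          * ∏ j ∈ Finset.univ.erase i, ‖T i - x j‖ := by
      refine (norm_sum_le _ _).trans ?_
      have hterm : ∀ k ∈ Finset.univ.erase i,
          ‖W k * ∏ j ∈ (Finset.univ.erase i).erase k, (T i - x j)‖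
          ≤ (‖W k‖ / d k) / (1 - t) * ∏ j ∈ Finset.univ.erase i, ‖T i - x j‖ := by
        intro k hk
        rw [norm_mul, norm_prod]
        have hsplit : ∏ j ∈ Finset.univ.erase i, ‖T i - x j‖
            = ‖T i - x k‖ * ∏ j ∈ (Finset.univ.erase i).erase k, ‖T i - x j‖ :=
          (Finset.mul_prod_erase _ _ hk).symm
        rw [hsplit]
        calc ‖W k‖ * ∏ j ∈ (Finset.univ.erase i).erase k, ‖T i - x j‖
            ≤ ((‖W k‖ / d k) * ‖T i - x k‖ / (1 - t))
              * ∏ j ∈ (Finset.univ.erase i).erase k, ‖T i - x j‖ :=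
              mul_le_mul_of_nonneg_right (hWj3 k hk)
                (Finset.prod_nonneg fun _ _ => norm_nonneg _)
          _ = (‖W k‖ / d k) / (1 - t) * (‖T i - x k‖
              * ∏ j ∈ (Finset.univ.erase i).erase k, ‖T i - x j‖) := by ring
      refine (Finset.sum_le_sum hterm).trans (le_of_eq ?_)
      rw [← Finset.sum_mul, ← Finset.sum_div]
    have hProd : ∏ j ∈ Finset.univ.erase i, ‖T i - x j‖
        ≤ (∏ j ∈ Finset.univ.erase i, (1 + (‖W j‖ / d j) / (1 - γ * t)))
          * ∏ j ∈ Finset.univ.erase i, ‖T i - T j‖ := by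
      rw [← Finset.prod_mul_distrib]
      exact Finset.prod_le_prod (fun j _ => norm_nonneg _) hfac
    have hSum_le : ∑ k ∈ Finset.univ.erase i, ‖W k‖ / d k ≤ A * t := by
      have hs := sum_le_epow_mul_pnorm (n := n) hp hpq (fun k => ‖W k‖ / d k)
        hti_nonneg (Finset.univ.erase i)
      rw [← ht_eq, hScast] at hs
      exact hs
    have hPB : ∏ j ∈ Finset.univ.erase i, (1 + (‖W j‖ / d j) / (1 - γ * t))
        ≤ (1 + t / (B * (1 - γ * t))) ^ (n - 1) := by
      have hAMGM := prod_one_add_le (Finset.univ.erase i) hSne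
        (fun j => (‖W j‖ / d j) / (1 - γ * t))
        (fun j _ => div_nonneg (hti_nonneg j) h1γt.le)
      have hsum_a : ∑ j ∈ Finset.univ.erase i, (‖W j‖ / d j) / (1 - γ * t)
          ≤ A * t / (1 - γ * t) := by
        rw [← Finset.sum_div]
        exact (div_le_div_iff_of_pos_right h1γt).mpr hSum_le
      have hsum_a0 : 0 ≤ ∑ j ∈ Finset.univ.erase i, (‖W j‖ / d j) / (1 - γ * t) :=
        Finset.sum_nonneg fun j _ => div_nonneg (hti_nonneg j) h1γt.le
      have hkeyc : A * t / (1 - γ * t) / ((n:ℝ) - 1) = t / (B * (1 - γ * t)) := by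
        rw [← hAB]
        field_simp
      have hbound : 1 + (∑ j ∈ Finset.univ.erase i, (‖W j‖ / d j) / (1 - γ * t))
            / ((Finset.univ.erase i).card : ℝ)
          ≤ 1 + t / (B * (1 - γ * t)) := by
        have hstep : (∑ j ∈ Finset.univ.erase i, (‖W j‖ / d j) / (1 - γ * t))
            / ((Finset.univ.erase i).card : ℝ) ≤ t / (B * (1 - γ * t)) := by
          rw [hScast, ← hkeyc]
          exact (div_le_div_iff_of_pos_right hmn).mpr hsum_a
        linarith
      refine hAMGM.trans ?_
      rw [← hScard]
      refine pow_le_pow_left₀ ?_ hbound _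
      have : 0 ≤ (∑ j ∈ Finset.univ.erase i, (‖W j‖ / d j) / (1 - γ * t))
          / ((Finset.univ.erase i).card : ℝ) := div_nonneg hsum_a0 (Nat.cast_nonneg _)
      linarith
    -- assembly
    have hS10 : 0 ≤ (∑ k ∈ Finset.univ.erase i, ‖W k‖ / d k) / (1 - t) :=
      div_nonneg (Finset.sum_nonneg fun j _ => hti_nonneg j) h1t.le
    have hPB0 : 0 ≤ ∏ j ∈ Finset.univ.erase i, (1 + (‖W j‖ / d j) / (1 - γ * t)) :=
      Finset.prod_nonneg fun j _ => by
        have := div_nonneg (hti_nonneg j) h1γt.le; linarith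
    calc ‖Wcorr f T i‖
        = ‖W i‖ * ‖∑ k ∈ Finset.univ.erase i,
            W k * ∏ j ∈ (Finset.univ.erase i).erase k, (T i - x j)‖
          / ∏ j ∈ Finset.univ.erase i, ‖T i - T j‖ := hnormW
      _ ≤ ‖W i‖ * ((∑ k ∈ Finset.univ.erase i, ‖W k‖ / d k) / (1 - t)
            * ((∏ j ∈ Finset.univ.erase i, (1 + (‖W j‖ / d j) / (1 - γ * t)))
              * ∏ j ∈ Finset.univ.erase i, ‖T i - T j‖))
          / ∏ j ∈ Finset.univ.erase i, ‖T i - T j‖ := by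
          apply div_le_div_of_nonneg_right ?_ hD_pos.le
          refine mul_le_mul_of_nonneg_left ?_ (norm_nonneg _)
          refine hNum.trans ?_
          exact mul_le_mul_of_nonneg_left hProd hS10
      _ = ‖W i‖ * ((∑ k ∈ Finset.univ.erase i, ‖W k‖ / d k) / (1 - t)
            * ∏ j ∈ Finset.univ.erase i, (1 + (‖W j‖ / d j) / (1 - γ * t))) := by
          rw [mul_div_assoc]; congr 1
          rw [← mul_assoc]; exact mul_div_cancel_right₀ _ hD_pos.ne'
      _ ≤ ‖W i‖ * (A * t / (1 - t) * (1 + t / (B * (1 - γ * t))) ^ (n - 1)) := by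
          refine mul_le_mul_of_nonneg_left ?_ (norm_nonneg _)
          refine mul_le_mul ((div_le_div_iff_of_pos_right h1t).mpr hSum_le) hPB hPB0 ?_
          exact div_nonneg (mul_nonneg hA0.le ht0) h1t.le
      _ = β t * ‖W i‖ := by rw [hβ]; ring
  have hc0 : 0 ≤ t / (B * (1 - γ * t)) :=
    div_nonneg ht0 (mul_nonneg (by linarith) h1γt.le)
  have hβ0 : 0 ≤ β t := by
    rw [hβ]
    apply mul_nonneg
    · exact div_nonneg (mul_nonneg (by linarith) ht0) h1t.le
    · exact pow_nonneg (by linarith) _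
  refine ⟨hTinj, ?_, hkey⟩
  -- part 2
  have h2 : E T ≤ (β t / (1 - γ * t)) * t := by
    rw [hE T]
    calc pnorm p (fun i => ‖Wcorr f T i‖ / dsep T i)
        ≤ (β t / (1 - γ * t)) * pnorm p (fun i => ‖W i‖ / d i) := by
          refine pnorm_le_mul hp (div_nonneg hβ0 h1γt.le) ?_
          intro i
          rw [abs_of_nonneg (div_nonneg (norm_nonneg _) (hdT_pos i).le),
            abs_of_nonneg (hti_nonneg i)]
          calc ‖Wcorr f T i‖ / dsep T i
              ≤ (β t * ‖W i‖) / ((1 - γ * t) * d i) :=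
                div_le_div₀ (mul_nonneg hβ0 (norm_nonneg _)) (hkey i)
                  (mul_pos h1γt (hd_pos i)) (hdT i)
            _ = β t / (1 - γ * t) * (‖W i‖ / d i) := (div_mul_div_comm _ _ _ _).symm
      _ = (β t / (1 - γ * t)) * t := by rw [← ht_eq]
  refine h2.trans (le_of_eq ?_)
  rw [hφ, hβ]
  field_simp
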